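/- Let X = [0,1]^d and K : X → P(X) a Markov kernel satisfying Assumptions A1 and A2, and set K̄ = max_{i∈1:d} sup_{(x,y)∈X²} K_i(y_i | y_{1:i−1}, x). Then there exist δ̄ ∈ (0, 1/2] and a continuous strictly increasing function v : (0, δ̄] → (0,∞) with v(δ) ≤ δ and v(δ) → 0 as δ → 0, independent of (x̃, x') ∈ X², such that for every δ ∈ (0, δ̄] and every (x̃, x') ∈ X² there is a closed axis-aligned hypercube W̄ ⊆ [0,1]^d of side length 2.5 K̄ δ with F_K(x, B_{v(δ)}(x')) ⊆ W̄ for all x ∈ B_{v(δ)}(x̃). -/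

import Mathlib

open MeasureTheory ProbabilityTheory Set Filter
open scoped Classical

/-- The closed unit cube `[0,1]^d` in `ℝ^d` (modeled as `Fin d → ℝ` with the sup norm). -/
def cube (d : ℕ) : Set (Fin d → ℝ) := {x | ∀ i, x i ∈ Set.Icc (0:ℝ) 1}

/-- Membership in the `b`-ary box `∏_j [c_j b^{-e_j}, (c_j+1) b^{-e_j})`. -/
def inBaryBox {d : ℕ} (b : ℕ) (e c : Fin d → ℕ) (x : Fin d → ℝ) : Prop :=
  ∀ j, (c j : ℝ) / (b : ℝ) ^ (e j) ≤ x j ∧ x j < ((c j : ℝ) + 1) / (b : ℝ) ^ (e j)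

/-- The block `{u^n : A ≤ n < A + b^m}` is a `(t,m,d)`-net in base `b`: every `b`-ary box of
volume `b^{t-m}` contains exactly `b^t` points of the block. -/
def IsNetBlock {d : ℕ} (b t m : ℕ) (u : ℕ → Fin d → ℝ) (A : ℕ) : Prop :=
  ∀ e c : Fin d → ℕ, (∀ j, c j < b ^ (e j)) → (∑ j, e j) = m - t →
    ((Finset.Ico A (A + b ^ m)).filter (fun n => inBaryBox b e c (u n))).card = b ^ t

/-- `(u^n)_{n≥0}` is a `(t,d)`-sequence in base `b`. -/
def IsTSeq {d : ℕ} (b t : ℕ) (u : ℕ → Fin d → ℝ) : Prop :=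
  (∀ n i, u n i ∈ Set.Ico (0:ℝ) 1) ∧
  ∀ a m : ℕ, t ≤ m → IsNetBlock b t m u (a * b ^ m)

/-- `(v^n)_{n≥0}` is a scalar `(t,1)`-sequence in base `b`. -/
def IsTSeq1 (b t : ℕ) (v : ℕ → ℝ) : Prop :=
  (∀ n, v n ∈ Set.Ico (0:ℝ) 1) ∧
  ∀ a m : ℕ, t ≤ m → ∀ c : ℕ, c < b ^ (m - t) →
    ((Finset.Ico (a * b ^ m) (a * b ^ m + b ^ m)).filter
      (fun n => (c : ℝ) / (b:ℝ) ^ (m - t) ≤ v n ∧ v n < ((c : ℝ) + 1) / (b:ℝ) ^ (m - t))).card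
      = b ^ t

/-- `k_n`: the smallest integer `k` such that `n < b^k`. -/
noncomputable def kOf (b n : ℕ) : ℕ := sInf {k | n < b ^ k}

section Rosenblatt

variable {d : ℕ}

/-- Marginal of the density `κ(·|x)` over the first `i` coordinates: the first `i` coordinates
are fixed to those of `y`, the remaining ones are integrated out over the unit cube. -/
noncomputable def marg (κ : (Fin d → ℝ) → (Fin d → ℝ) → ℝ) (i : ℕ) (x y : Fin d → ℝ) : ℝ :=
  ∫ z in cube d, κ x (fun j => if (j : ℕ) < i then y j else z j)

/-- `K_i(y_i | y_{1:i-1}, x)`: the `i`-th conditional density of the kernel density `κ`. -/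
noncomputable def condDensity (κ : (Fin d → ℝ) → (Fin d → ℝ) → ℝ) (i : Fin d)
    (x y : Fin d → ℝ) : ℝ :=
  marg κ ((i : ℕ) + 1) x y / marg κ (i : ℕ) x y

/-- `F_{K_i}(s | x, y_{1:i-1})`: the `i`-th conditional CDF of the kernel density `κ`. -/
noncomputable def condCDF' (κ : (Fin d → ℝ) → (Fin d → ℝ) → ℝ) (i : Fin d)
    (x y : Fin d → ℝ) (s : ℝ) : ℝ :=
  ∫ r in (0:ℝ)..s, condDensity κ i x (Function.update y i r)

/-- The Rosenblatt transform `F_K(x,·)` of the kernel with density `κ`. -/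
noncomputable def Ros (κ : (Fin d → ℝ) → (Fin d → ℝ) → ℝ) (x y : Fin d → ℝ) : Fin d → ℝ :=
  fun i => condCDF' κ i x y (y i)

/-- Assumption (A1): each conditional CDF is strictly increasing in its main argument. -/
def A1 (κ : (Fin d → ℝ) → (Fin d → ℝ) → ℝ) : Prop :=
  ∀ x ∈ cube d, ∀ y ∈ cube d, ∀ i : Fin d,
    StrictMonoOn (fun s => condCDF' κ i x y s) (Set.Icc (0:ℝ) 1)

/-- Assumption (A2): the density `κ` is continuous on `X²` and bounded below by `Klow > 0`. -/
def A2 (κ : (Fin d → ℝ) → (Fin d → ℝ) → ℝ) (Klow : ℝ) : Prop :=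
  ContinuousOn (fun p : (Fin d → ℝ) × (Fin d → ℝ) => κ p.1 p.2) ((cube d) ×ˢ (cube d)) ∧
  0 < Klow ∧ ∀ x ∈ cube d, ∀ y ∈ cube d, Klow ≤ κ x y

/-- `κ` is a probability density in its second argument, w.r.t. Lebesgue measure on the cube. -/
def IsMarkovDensity (κ : (Fin d → ℝ) → (Fin d → ℝ) → ℝ) : Prop :=
  ∀ x ∈ cube d, (∀ y ∈ cube d, 0 ≤ κ x y) ∧ ∫ y in cube d, κ x y = 1

/-- `G` is the inverse Rosenblatt transform associated with `κ`. -/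
def IsInvRos (κ : (Fin d → ℝ) → (Fin d → ℝ) → ℝ)
    (G : (Fin d → ℝ) → (Fin d → ℝ) → (Fin d → ℝ)) : Prop :=
  ∀ x ∈ cube d, ∀ u : Fin d → ℝ, (∀ i, u i ∈ Set.Icc (0:ℝ) 1) →
    G x u ∈ cube d ∧ Ros κ x (G x u) = u

/-- The sup-norm ball `B_δ(x)` of radius `δ` around `x`, intersected with the cube. -/
def ball' {d : ℕ} (δ : ℝ) (x : Fin d → ℝ) : Set (Fin d → ℝ) :=
  {y ∈ cube d | ‖y - x‖ ≤ δ}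

end Rosenblatt

/-- `K̄ = max_{i} sup_{(x,y) ∈ X²} K_i(y_i | y_{1:i-1}, x)`. -/
noncomputable def Kbar {d : ℕ} (κ : (Fin d → ℝ) → (Fin d → ℝ) → ℝ) : ℝ :=
  sSup {r | ∃ (i : Fin d) (x y : Fin d → ℝ),
    x ∈ cube d ∧ y ∈ cube d ∧ condDensity κ i x y = r}

/-! ### Auxiliary lemmas for Lemma 6 -/

section Lemma6Aux

variable {d : ℕ}

lemma cube_eq_pi' (d : ℕ) : cube d = Set.pi Set.univ (fun _ : Fin d => Set.Icc (0:ℝ) 1) := by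
  ext x
  simp only [cube, Set.mem_setOf_eq, Set.mem_pi, Set.mem_univ, forall_true_left]

lemma isClosed_cube : IsClosed (cube d) := by
  rw [cube_eq_pi']; exact isClosed_set_pi fun i _ => isClosed_Icc

lemma isCompact_cube : IsCompact (cube d) := by
  rw [cube_eq_pi']; exact isCompact_univ_pi fun i => isCompact_Icc

lemma measurableSet_cube : MeasurableSet (cube d) := isClosed_cube.measurableSet

lemma volume_cube : volume (cube d) = 1 := by
  rw [cube_eq_pi', volume_pi_pi]; simp

lemma zero_mem_cube : (fun _ : Fin d => (0:ℝ)) ∈ cube d := fun i => by simp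

lemma mix_mem_cube {i : ℕ} {y z : Fin d → ℝ} (hy : y ∈ cube d) (hz : z ∈ cube d) :
    (fun j : Fin d => if (j : ℕ) < i then y j else z j) ∈ cube d := by
  intro j; by_cases h : (j:ℕ) < i <;> simp only [if_pos, if_neg, h, if_true, if_false]
  · exact hy j
  · exact hz j

lemma update_mem_cube {i : Fin d} {y : Fin d → ℝ} (hy : y ∈ cube d) {r : ℝ}
    (hr : r ∈ Set.Icc (0:ℝ) 1) : Function.update y i r ∈ cube d := by
  intro j; by_cases h : j = i
  · subst h; simpa using hr
  · rw [Function.update_of_ne h]; exact hy j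

lemma dist_update_le {i : Fin d} (y y' : Fin d → ℝ) (r : ℝ) :
    dist (Function.update y i r) (Function.update y' i r) ≤ dist y y' := by
  rw [dist_pi_le_iff dist_nonneg]
  intro j
  by_cases h : j = i
  · subst h; simp [dist_nonneg]
  · rw [Function.update_of_ne h, Function.update_of_ne h]; exact dist_le_pi_dist y y' j

lemma dist_update_update_le {i : Fin d} (y : Fin d → ℝ) (r r' : ℝ) :
    dist (Function.update y i r) (Function.update y i r') ≤ dist r r' := by
  rw [dist_pi_le_iff dist_nonneg]
  intro j
  by_cases h : j = i
  · subst h; simp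
  · rw [Function.update_of_ne h, Function.update_of_ne h]; simp [dist_nonneg]

lemma pi_restrict_eq : (Measure.pi fun _ : Fin d => volume.restrict (Set.Icc (0:ℝ) 1))
    = volume.restrict (cube d) := by
  refine Measure.pi_eq fun s hs => ?_
  rw [Measure.restrict_apply (MeasurableSet.univ_pi hs), cube_eq_pi', ← Set.pi_inter_distrib,
    volume_pi_pi]
  exact Finset.prod_congr rfl fun i _ => (Measure.restrict_apply (hs i)).symm

lemma fubini_slice (i : Fin d) (h : (Fin d → ℝ) → ℝ) (hc : Continuous h)
    (hpos : ∀ z ∈ cube d, 0 ≤ h z) :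
    (∫ r in (0:ℝ)..1, (∫ z in cube d, h (Function.update z i r)))
      = ∫ z in cube d, h z := by
  classical
  set P : Measure ℝ := volume.restrict (Set.Icc (0:ℝ) 1) with hP
  have hPuniv : P Set.univ = 1 := by
    rw [hP, Measure.restrict_apply_univ, Real.volume_Icc]; norm_num
  set ν : Measure (Fin d → ℝ) := Measure.pi (fun _ : Fin d => P) with hν
  have hνr : ν = volume.restrict (cube d) := pi_restrict_eq
  have hνae : ∀ᵐ z ∂ν, z ∈ cube d := by
    rw [hνr]; exact ae_restrict_mem measurableSet_cube
  obtain ⟨C, hC⟩ : ∃ C : ℝ, ∀ z ∈ cube d, h z ≤ C := by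
    obtain ⟨C, hC⟩ := isCompact_cube.exists_bound_of_continuousOn hc.continuousOn
    exact ⟨C, fun z hz => le_trans (le_abs_self _) (hC z hz)⟩
  set H : (Fin d → ℝ) → ENNReal := fun z => ENNReal.ofReal (h z) with hH
  have hHm : Measurable H := ENNReal.measurable_ofReal.comp hc.measurable
  have hupdc : ∀ r : ℝ, Continuous fun z : Fin d → ℝ => Function.update z i r := by
    intro r
    exact continuous_id.update i continuous_const
  set G : (Fin d → ℝ) → ENNReal := fun z => ∫⁻ r, H (Function.update z i r) ∂P with hG
  have hGm : Measurable G := by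
    have : G = ∫⋯∫⁻_{i}, H ∂(fun _ : Fin d => P) := by
      funext z; rw [lmarginal_singleton]
    rw [this]; exact hHm.lmarginal _
  have key : ∫⁻ z, H z ∂ν = ∫⁻ z, G z ∂ν := by
    set x₀ : Fin d → ℝ := fun _ => 0 with hx₀
    rw [lintegral_eq_lmarginal_univ (f := H) x₀, lintegral_eq_lmarginal_univ (f := G) x₀,
      lmarginal_erase' _ hHm (Finset.mem_univ i), lmarginal_erase' _ hGm (Finset.mem_univ i)]
    congr 1
    funext z
    have h2 : (fun r => G (Function.update z i r)) = fun _ => G z := by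
      funext r
      simp only [hG, Function.update_idem]
    simp only [← hG, h2, lintegral_const, hPuniv, mul_one]
    rfl
  have hum : Measurable fun p : ℝ × (Fin d → ℝ) => H (Function.update p.2 i p.1) :=
    hHm.comp (measurable_update'.comp measurable_swap)
  have hinner_m : Measurable fun r : ℝ => ∫⁻ z, H (Function.update z i r) ∂ν :=
    Measurable.lintegral_prod_right' (f := fun p : ℝ × (Fin d → ℝ) =>
      H (Function.update p.2 i p.1)) hum
  have step1 : (∫ r in (0:ℝ)..1, (∫ z in cube d, h (Function.update z i r)))
      = ∫ r, (∫ z in cube d, h (Function.update z i r)) ∂P := by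
    rw [intervalIntegral.integral_of_le zero_le_one, hP, ← integral_Icc_eq_integral_Ioc]
  have step2 : ∫ r, (∫ z in cube d, h (Function.update z i r)) ∂P
      = ∫ r, (∫⁻ z, H (Function.update z i r) ∂ν).toReal ∂P := by
    refine integral_congr_ae ?_
    filter_upwards [ae_restrict_mem measurableSet_Icc] with r hr
    rw [← hνr]
    exact integral_eq_lintegral_of_nonneg_ae
      (hνae.mono fun z hz => hpos _ (update_mem_cube hz hr))
      (hc.comp (hupdc r)).aestronglyMeasurable
  have step3 : ∫ r, (∫⁻ z, H (Function.update z i r) ∂ν).toReal ∂P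
      = (∫⁻ r, (∫⁻ z, H (Function.update z i r) ∂ν) ∂P).toReal := by
    refine integral_toReal hinner_m.aemeasurable ?_
    filter_upwards [ae_restrict_mem measurableSet_Icc] with r hr
    calc ∫⁻ z, H (Function.update z i r) ∂ν ≤ ∫⁻ _, ENNReal.ofReal C ∂ν := by
          refine lintegral_mono_ae (hνae.mono fun z hz => ?_)
          exact ENNReal.ofReal_le_ofReal (hC _ (update_mem_cube hz hr))
      _ < ⊤ := by
          rw [lintegral_const, hν, Measure.pi_univ]
          simp [hPuniv]
  have step4 : ∫⁻ r, (∫⁻ z, H (Function.update z i r) ∂ν) ∂P = ∫⁻ z, H z ∂ν := by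
    rw [lintegral_lintegral_swap hum.aemeasurable]
    exact key.symm
  have step5 : (∫⁻ z, H z ∂ν).toReal = ∫ z in cube d, h z := by
    rw [← hνr]
    exact (integral_eq_lintegral_of_nonneg_ae (hνae.mono hpos)
      hc.aestronglyMeasurable).symm
  rw [step1, step2, step3, step4, step5]

variable (k : (Fin d → ℝ) → (Fin d → ℝ) → ℝ)
  (hk : Continuous fun p : (Fin d → ℝ) × (Fin d → ℝ) => k p.1 p.2)
  {klow kmax : ℝ} (hklow : 0 < klow)
  (hlb : ∀ x ∈ cube d, ∀ y ∈ cube d, klow ≤ k x y)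
  (hub : ∀ x ∈ cube d, ∀ y ∈ cube d, k x y ≤ kmax)

include hk in
lemma mix_cont (x : Fin d → ℝ) (i : ℕ) (y : Fin d → ℝ) :
    Continuous fun z : Fin d → ℝ => k x (fun j => if (j:ℕ) < i then y j else z j) := by
  refine hk.comp (Continuous.prodMk continuous_const (continuous_pi fun j => ?_))
  show Continuous fun z : Fin d → ℝ => if (j:ℕ) < i then y j else z j
  by_cases h : (j:ℕ) < i
  · have : (fun z : Fin d → ℝ => if (j:ℕ) < i then y j else z j) = fun _ => y j := by
      funext z; rw [if_pos h]
    rw [this]; exact continuous_const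
  · have : (fun z : Fin d → ℝ => if (j:ℕ) < i then y j else z j) = fun z => z j := by
      funext z; rw [if_neg h]
    rw [this]; exact continuous_apply j

include hk in
lemma marg_integrable (x : Fin d → ℝ) (i : ℕ) (y : Fin d → ℝ) :
    IntegrableOn (fun z => k x (fun j => if (j:ℕ) < i then y j else z j)) (cube d) volume :=
  ((mix_cont k hk x i y).continuousOn).integrableOn_compact isCompact_cube

include hk hklow hlb in
lemma marg_lb {x y : Fin d → ℝ} (hx : x ∈ cube d) (hy : y ∈ cube d) (i : ℕ) :
    klow ≤ marg k i x y := by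
  have h1 : (klow : ℝ) = ∫ _ in cube d, klow := by
    rw [setIntegral_const, measureReal_def, volume_cube]; simp
  rw [h1, marg]
  refine setIntegral_mono_on (integrableOn_const ?_) (marg_integrable k hk x i y)
    measurableSet_cube (fun z hz => hlb x hx _ (mix_mem_cube hy hz))
  rw [volume_cube]; exact ENNReal.one_ne_top

include hk hub in
lemma marg_ub {x y : Fin d → ℝ} (hx : x ∈ cube d) (hy : y ∈ cube d) (i : ℕ) :
    marg k i x y ≤ kmax := by
  have h1 : (kmax : ℝ) = ∫ _ in cube d, kmax := by
    rw [setIntegral_const, measureReal_def, volume_cube]; simp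
  rw [h1, marg]
  refine setIntegral_mono_on (marg_integrable k hk x i y) (integrableOn_const ?_)
    measurableSet_cube (fun z hz => hub x hx _ (mix_mem_cube hy hz))
  rw [volume_cube]; exact ENNReal.one_ne_top

include hk in
lemma marg_osc {ε ρ : ℝ}
    (hUC : ∀ p ∈ (cube d) ×ˢ (cube d), ∀ q ∈ (cube d) ×ˢ (cube d),
      dist p q ≤ ρ → |k p.1 p.2 - k q.1 q.2| ≤ ε)
    {x₁ x₂ y₁ y₂ : Fin d → ℝ} (hx₁ : x₁ ∈ cube d) (hx₂ : x₂ ∈ cube d)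
    (hy₁ : y₁ ∈ cube d) (hy₂ : y₂ ∈ cube d)
    (hdx : dist x₁ x₂ ≤ ρ) (hdy : dist y₁ y₂ ≤ ρ) (i : ℕ) :
    |marg k i x₁ y₁ - marg k i x₂ y₂| ≤ ε := by
  have key : ∀ z ∈ cube d,
      ‖k x₁ (fun j => if (j:ℕ) < i then y₁ j else z j)
        - k x₂ (fun j => if (j:ℕ) < i then y₂ j else z j)‖ ≤ ε := by
    intro z hz
    have := hUC (x₁, fun j => if (j:ℕ) < i then y₁ j else z j)
      ⟨hx₁, mix_mem_cube hy₁ hz⟩ (x₂, fun j => if (j:ℕ) < i then y₂ j else z j)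
      ⟨hx₂, mix_mem_cube hy₂ hz⟩ ?_
    · simpa using this
    · rw [Prod.dist_eq]
      refine max_le hdx ?_
      rw [dist_pi_le_iff (le_trans dist_nonneg hdx)]
      intro j
      by_cases h : (j:ℕ) < i
      · simp only [h, if_true]; exact le_trans (dist_le_pi_dist y₁ y₂ j) hdy
      · simp only [h, if_false, dist_self]; exact le_trans dist_nonneg hdx
  have hsub : marg k i x₁ y₁ - marg k i x₂ y₂ =
      ∫ z in cube d, (k x₁ (fun j => if (j:ℕ) < i then y₁ j else z j)
        - k x₂ (fun j => if (j:ℕ) < i then y₂ j else z j)) := by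
    rw [marg, marg, ← integral_sub (marg_integrable k hk x₁ i y₁) (marg_integrable k hk x₂ i y₂)]
  rw [← Real.norm_eq_abs, hsub]
  calc ‖_‖ ≤ ε * (volume (cube d)).toReal :=
        norm_setIntegral_le_of_norm_le_const (by rw [volume_cube]; exact ENNReal.one_lt_top) key
    _ = ε := by rw [volume_cube]; simp

include hk hklow hlb hub in
lemma condDensity_bounds {x y : Fin d → ℝ} (hx : x ∈ cube d) (hy : y ∈ cube d) (i : Fin d) :
    klow / kmax ≤ condDensity k i x y ∧ condDensity k i x y ≤ kmax / klow := by
  have hkm : (0:ℝ) < kmax := lt_of_lt_of_le hklow (le_trans (hlb x hx y hy) (hub x hx y hy))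
  have ha1 := marg_lb k hk hklow hlb hx hy ((i:ℕ)+1)
  have ha2 := marg_ub k hk hub hx hy ((i:ℕ)+1)
  have hb1 := marg_lb k hk hklow hlb hx hy (i:ℕ)
  have hb2 := marg_ub k hk hub hx hy (i:ℕ)
  rw [condDensity]
  constructor
  · rw [div_le_div_iff₀ hkm (lt_of_lt_of_le hklow hb1)]; nlinarith
  · rw [div_le_div_iff₀ (lt_of_lt_of_le hklow hb1) hklow]; nlinarith

include hk hklow hlb hub in
lemma condDensity_osc {ε ρ : ℝ}
    (hUC : ∀ p ∈ (cube d) ×ˢ (cube d), ∀ q ∈ (cube d) ×ˢ (cube d),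
      dist p q ≤ ρ → |k p.1 p.2 - k q.1 q.2| ≤ ε)
    {x₁ x₂ y₁ y₂ : Fin d → ℝ} (hx₁ : x₁ ∈ cube d) (hx₂ : x₂ ∈ cube d)
    (hy₁ : y₁ ∈ cube d) (hy₂ : y₂ ∈ cube d)
    (hdx : dist x₁ x₂ ≤ ρ) (hdy : dist y₁ y₂ ≤ ρ) (i : Fin d) :
    |condDensity k i x₁ y₁ - condDensity k i x₂ y₂| ≤ 2 * kmax * ε / klow ^ 2 := by
  have ha1 := marg_lb k hk hklow hlb hx₁ hy₁ ((i:ℕ)+1)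
  have ha2 := marg_ub k hk hub hx₁ hy₁ ((i:ℕ)+1)
  have hb1 := marg_lb k hk hklow hlb hx₁ hy₁ (i:ℕ)
  have hb2 := marg_ub k hk hub hx₁ hy₁ (i:ℕ)
  have ha1' := marg_lb k hk hklow hlb hx₂ hy₂ ((i:ℕ)+1)
  have ha2' := marg_ub k hk hub hx₂ hy₂ ((i:ℕ)+1)
  have hb1' := marg_lb k hk hklow hlb hx₂ hy₂ (i:ℕ)
  have hb2' := marg_ub k hk hub hx₂ hy₂ (i:ℕ)
  have hda := marg_osc k hk hUC hx₁ hx₂ hy₁ hy₂ hdx hdy ((i:ℕ)+1)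
  have hdb := marg_osc k hk hUC hx₁ hx₂ hy₁ hy₂ hdx hdy (i:ℕ)
  set a₁ := marg k ((i:ℕ)+1) x₁ y₁
  set b₁ := marg k (i:ℕ) x₁ y₁
  set a₂ := marg k ((i:ℕ)+1) x₂ y₂
  set b₂ := marg k (i:ℕ) x₂ y₂
  have hε0 : 0 ≤ ε := le_trans (abs_nonneg _) hdb
  have hb₁0 : (0:ℝ) < b₁ := lt_of_lt_of_le hklow hb1
  have hb₂0 : (0:ℝ) < b₂ := lt_of_lt_of_le hklow hb1'
  have hkm : (0:ℝ) < kmax := lt_of_lt_of_le hklow (le_trans ha1 ha2)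
  have key : condDensity k i x₁ y₁ - condDensity k i x₂ y₂
      = ((a₁ - a₂) * b₂ + a₂ * (b₂ - b₁)) / (b₁ * b₂) := by
    rw [condDensity, condDensity, div_sub_div _ _ hb₁0.ne' hb₂0.ne']; ring
  rw [key, abs_div]
  have hnum : |(a₁ - a₂) * b₂ + a₂ * (b₂ - b₁)| ≤ ε * kmax + kmax * ε := by
    refine le_trans (abs_add_le _ _) (add_le_add ?_ ?_)
    · rw [abs_mul]
      exact mul_le_mul hda (by rw [abs_of_pos hb₂0]; exact hb2') (abs_nonneg _) hε0
    · rw [abs_mul, abs_sub_comm]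
      exact mul_le_mul (by rw [abs_of_pos (lt_of_lt_of_le hklow ha1')]; exact ha2') hdb
        (abs_nonneg _) hkm.le
  have hden : klow ^ 2 ≤ |b₁ * b₂| := by
    rw [abs_of_pos (mul_pos hb₁0 hb₂0)]; nlinarith
  calc |(a₁ - a₂) * b₂ + a₂ * (b₂ - b₁)| / |b₁ * b₂|
      ≤ (ε * kmax + kmax * ε) / klow ^ 2 :=
        div_le_div₀ (by positivity) hnum (by positivity) hden
    _ = 2 * kmax * ε / klow ^ 2 := by ring

lemma marg_update (κ : (Fin d → ℝ) → (Fin d → ℝ) → ℝ) (i : Fin d) (x y : Fin d → ℝ) (r : ℝ) :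
    marg κ (i:ℕ) x (Function.update y i r) = marg κ (i:ℕ) x y := by
  have h1 : (fun z : Fin d → ℝ =>
        κ x fun j => if (j:ℕ) < (i:ℕ) then (Function.update y i r) j else z j)
      = fun z : Fin d → ℝ => κ x fun j => if (j:ℕ) < (i:ℕ) then y j else z j := by
    funext z; congr 1; funext j
    by_cases h : (j:ℕ) < (i:ℕ)
    · rw [if_pos h, if_pos h, Function.update_of_ne (Fin.ne_of_val_ne (Nat.ne_of_lt h))]
    · rw [if_neg h, if_neg h]
  rw [marg, marg, h1]

lemma condDensity_update (κ : (Fin d → ℝ) → (Fin d → ℝ) → ℝ) (i : Fin d) (x y : Fin d → ℝ)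
    (r : ℝ) : condDensity κ i x (Function.update y i r)
      = marg κ ((i:ℕ)+1) x (Function.update y i r) / marg κ (i:ℕ) x y := by
  rw [condDensity, marg_update]

include hk hklow hlb hub in
lemma condDensity_update_contOn
    (hUC : ∀ ε > 0, ∃ ρ > 0, ∀ p ∈ (cube d) ×ˢ (cube d), ∀ q ∈ (cube d) ×ˢ (cube d),
      dist p q ≤ ρ → |k p.1 p.2 - k q.1 q.2| ≤ ε)
    {x y : Fin d → ℝ} (hx : x ∈ cube d) (hy : y ∈ cube d) (i : Fin d) :
    ContinuousOn (fun r => condDensity k i x (Function.update y i r)) (Set.Icc (0:ℝ) 1) := by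
  have hN : ContinuousOn (fun r => marg k ((i:ℕ)+1) x (Function.update y i r))
      (Set.Icc (0:ℝ) 1) := by
    rw [Metric.continuousOn_iff]
    intro r₀ hr₀ ε hε
    obtain ⟨ρ, hρ, hP⟩ := hUC (ε/2) (by linarith)
    refine ⟨ρ, hρ, fun r hr hdist => ?_⟩
    rw [Real.dist_eq]
    refine lt_of_le_of_lt (marg_osc k hk hP hx hx (update_mem_cube hy hr)
      (update_mem_cube hy hr₀) (by simpa using hρ.le)
      (le_trans (dist_update_update_le y r r₀) hdist.le) ((i:ℕ)+1)) (by linarith)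
  have heq : ∀ r ∈ Set.Icc (0:ℝ) 1, condDensity k i x (Function.update y i r)
      = marg k ((i:ℕ)+1) x (Function.update y i r) / marg k (i:ℕ) x y :=
    fun r _ => condDensity_update k i x y r
  exact (hN.div_const _).congr heq

include hk hklow hlb hub in
lemma Ros_nonneg {x y : Fin d → ℝ} (hx : x ∈ cube d) (hy : y ∈ cube d) (i : Fin d) :
    0 ≤ Ros k x y i := by
  have hkm : (0:ℝ) < kmax := lt_of_lt_of_le hklow (le_trans (hlb x hx y hy) (hub x hx y hy))
  refine intervalIntegral.integral_nonneg (hy i).1 fun u hu => ?_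
  have hu1 : u ∈ Set.Icc (0:ℝ) 1 := ⟨hu.1, le_trans hu.2 (hy i).2⟩
  exact le_trans (by positivity)
    (condDensity_bounds k hk hklow hlb hub hx (update_mem_cube hy hu1) i).1

include hk hklow hlb hub in
lemma Ros_le_one
    (hUC : ∀ ε > 0, ∃ ρ > 0, ∀ p ∈ (cube d) ×ˢ (cube d), ∀ q ∈ (cube d) ×ˢ (cube d),
      dist p q ≤ ρ → |k p.1 p.2 - k q.1 q.2| ≤ ε)
    {x y : Fin d → ℝ} (hx : x ∈ cube d) (hy : y ∈ cube d) (i : Fin d) :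
    Ros k x y i ≤ 1 := by
  have hcg := condDensity_update_contOn k hk hklow hlb hub hUC hx hy i
  set g : ℝ → ℝ := fun r => condDensity k i x (Function.update y i r) with hg
  have hI1 : IntervalIntegrable g volume 0 (y i) :=
    (hcg.mono (by rw [Set.uIcc_of_le (hy i).1]; exact Set.Icc_subset_Icc_right (hy i).2)).intervalIntegrable
  have hI2 : IntervalIntegrable g volume (y i) 1 :=
    (hcg.mono (by rw [Set.uIcc_of_le (hy i).2]; exact Set.Icc_subset_Icc_left (hy i).1)).intervalIntegrable
  have hgpos : ∀ u ∈ Set.Icc (0:ℝ) 1, 0 ≤ g u := by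
    intro u hu
    have hkm : (0:ℝ) < kmax := lt_of_lt_of_le hklow (le_trans (hlb x hx y hy) (hub x hx y hy))
    exact le_trans (by positivity)
      (condDensity_bounds k hk hklow hlb hub hx (update_mem_cube hy hu) i).1
  have hD : (0:ℝ) < marg k (i:ℕ) x y :=
    lt_of_lt_of_le hklow (marg_lb k hk hklow hlb hx hy _)
  have step1 : Ros k x y i ≤ ∫ r in (0:ℝ)..1, g r := by
    rw [← intervalIntegral.integral_add_adjacent_intervals hI1 hI2]
    have : 0 ≤ ∫ r in (y i)..1, g r :=
      intervalIntegral.integral_nonneg (hy i).2 fun u hu =>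
        hgpos u ⟨le_trans (hy i).1 hu.1, hu.2⟩
    simp only [Ros, condCDF']
    linarith
  have step2 : (∫ r in (0:ℝ)..1, g r)
      = (∫ r in (0:ℝ)..1, marg k ((i:ℕ)+1) x (Function.update y i r)) / marg k (i:ℕ) x y := by
    rw [← intervalIntegral.integral_div]
    exact intervalIntegral.integral_congr fun r _ => condDensity_update k i x y r
  have step3 : (∫ r in (0:ℝ)..1, marg k ((i:ℕ)+1) x (Function.update y i r))
      = marg k (i:ℕ) x y := by
    have hint : ∀ r : ℝ, marg k ((i:ℕ)+1) x (Function.update y i r)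
        = ∫ z in cube d, (fun z : Fin d → ℝ =>
            k x fun j => if (j:ℕ) < (i:ℕ) then y j else z j) (Function.update z i r) := by
      intro r
      rw [marg]
      refine setIntegral_congr_fun measurableSet_cube fun z _ => ?_
      congr 1
      funext j
      rcases Nat.lt_trichotomy (j:ℕ) (i:ℕ) with hj | hj | hj
      · rw [if_pos (Nat.lt_succ_of_lt hj), if_pos hj,
          Function.update_of_ne (Fin.ne_of_val_ne (Nat.ne_of_lt hj))]
      · have hj' : j = i := Fin.ext hj
        subst hj'
        rw [if_pos (Nat.lt_succ_self _), if_neg (lt_irrefl _), Function.update_self,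
          Function.update_self]
      · rw [if_neg (by omega), if_neg (by omega),
          Function.update_of_ne (Fin.ne_of_val_ne (Nat.ne_of_gt hj))]
    simp_rw [hint]
    exact fubini_slice i _ (mix_cont k hk x (i:ℕ) y)
      (fun z hz => le_trans hklow.le (hlb x hx _ (mix_mem_cube hy hz)))
  rw [step2, step3] at step1
  rw [div_self (ne_of_gt hD)] at step1
  exact step1

include hk hklow hlb hub in
lemma Ros_osc
    (hUC : ∀ ε > 0, ∃ ρ > 0, ∀ p ∈ (cube d) ×ˢ (cube d), ∀ q ∈ (cube d) ×ˢ (cube d),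
      dist p q ≤ ρ → |k p.1 p.2 - k q.1 q.2| ≤ ε)
    {ε ρ ρ' Kb : ℝ}
    (hUCρ : ∀ p ∈ (cube d) ×ˢ (cube d), ∀ q ∈ (cube d) ×ˢ (cube d),
      dist p q ≤ ρ → |k p.1 p.2 - k q.1 q.2| ≤ ε)
    (hKb : ∀ (i : Fin d) (x y : Fin d → ℝ), x ∈ cube d → y ∈ cube d →
      condDensity k i x y ≤ Kb)
    (hKb0 : 0 ≤ Kb)
    {x xt y x' : Fin d → ℝ} (hx : x ∈ cube d) (hxt : xt ∈ cube d)
    (hy : y ∈ cube d) (hx' : x' ∈ cube d)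
    (hdx : dist x xt ≤ ρ') (hdy : dist y x' ≤ ρ') (hρ' : ρ' ≤ ρ) (i : Fin d) :
    |Ros k x y i - Ros k xt x' i| ≤ 2 * kmax * ε / klow ^ 2 + Kb * ρ' := by
  set g₁ : ℝ → ℝ := fun r => condDensity k i x (Function.update y i r) with hg₁
  set g₂ : ℝ → ℝ := fun r => condDensity k i xt (Function.update x' i r) with hg₂
  have hρ'0 : 0 ≤ ρ' := le_trans dist_nonneg hdx
  have hc₁ := condDensity_update_contOn k hk hklow hlb hub hUC hx hy i
  have hc₂ := condDensity_update_contOn k hk hklow hlb hub hUC hxt hx' i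
  have hsub1 : Set.uIcc (0:ℝ) (y i) ⊆ Set.Icc 0 1 := by
    rw [Set.uIcc_of_le (hy i).1]; exact Set.Icc_subset_Icc_right (hy i).2
  have hsub2 : Set.uIcc (0:ℝ) (x' i) ⊆ Set.Icc 0 1 := by
    rw [Set.uIcc_of_le (hx' i).1]; exact Set.Icc_subset_Icc_right (hx' i).2
  have hsub3 : Set.uIcc (x' i) (y i) ⊆ Set.Icc 0 1 :=
    Set.uIcc_subset_Icc (hx' i) (hy i)
  have hI₁ : IntervalIntegrable g₁ volume 0 (y i) := (hc₁.mono hsub1).intervalIntegrable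
  have hI₂ : IntervalIntegrable g₂ volume 0 (y i) := (hc₂.mono hsub1).intervalIntegrable
  have hI₃ : IntervalIntegrable g₂ volume 0 (x' i) := (hc₂.mono hsub2).intervalIntegrable
  have hdecomp : Ros k x y i - Ros k xt x' i
      = (∫ r in (0:ℝ)..(y i), (g₁ r - g₂ r)) + ∫ r in (x' i)..(y i), g₂ r := by
    rw [intervalIntegral.integral_sub hI₁ hI₂,
      ← intervalIntegral.integral_interval_sub_left hI₂ hI₃]
    simp only [Ros, condCDF']
    ring
  have hbound1 : |∫ r in (0:ℝ)..(y i), (g₁ r - g₂ r)| ≤ 2 * kmax * ε / klow ^ 2 := by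
    have key : ∀ r ∈ Set.uIoc (0:ℝ) (y i), ‖g₁ r - g₂ r‖ ≤ 2 * kmax * ε / klow ^ 2 := by
      intro r hr
      have hr1 : r ∈ Set.Icc (0:ℝ) 1 := hsub1 (Set.uIoc_subset_uIcc hr)
      rw [Real.norm_eq_abs]
      exact condDensity_osc k hk hklow hlb hub hUCρ hx hxt
        (update_mem_cube hy hr1) (update_mem_cube hx' hr1)
        (le_trans hdx hρ') (le_trans (dist_update_le y x' r) (le_trans hdy hρ')) i
    calc |∫ r in (0:ℝ)..(y i), (g₁ r - g₂ r)|
        ≤ 2 * kmax * ε / klow ^ 2 * |y i - 0| :=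
          intervalIntegral.norm_integral_le_of_norm_le_const key
      _ ≤ 2 * kmax * ε / klow ^ 2 * 1 := by
          have hnn : (0:ℝ) ≤ 2 * kmax * ε / klow ^ 2 :=
            le_trans (abs_nonneg _) (condDensity_osc k hk hklow hlb hub hUCρ hx hxt
              (update_mem_cube (i := i) (r := 0) hy (Set.mem_Icc.2 ⟨le_refl 0, zero_le_one⟩))
              (update_mem_cube (i := i) (r := 0) hx' (Set.mem_Icc.2 ⟨le_refl 0, zero_le_one⟩))
              (le_trans hdx hρ') (le_trans (dist_update_le y x' 0) (le_trans hdy hρ')) i)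
          refine mul_le_mul_of_nonneg_left ?_ hnn
          rw [sub_zero, abs_of_nonneg (hy i).1]; exact (hy i).2
      _ = 2 * kmax * ε / klow ^ 2 := mul_one _
  have hbound2 : |∫ r in (x' i)..(y i), g₂ r| ≤ Kb * ρ' := by
    have key : ∀ r ∈ Set.uIoc (x' i) (y i), ‖g₂ r‖ ≤ Kb := by
      intro r hr
      have hr1 : r ∈ Set.Icc (0:ℝ) 1 := hsub3 (Set.uIoc_subset_uIcc hr)
      have hmem := update_mem_cube hx' hr1 (i := i)
      have hkm : (0:ℝ) < kmax := lt_of_lt_of_le hklow (le_trans (hlb x hx y hy) (hub x hx y hy))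
      rw [Real.norm_eq_abs, abs_of_nonneg (le_trans (by positivity)
        (condDensity_bounds k hk hklow hlb hub hxt hmem i).1)]
      exact hKb i xt _ hxt hmem
    calc |∫ r in (x' i)..(y i), g₂ r| ≤ Kb * |y i - x' i| :=
          intervalIntegral.norm_integral_le_of_norm_le_const key
      _ ≤ Kb * ρ' := by
          refine mul_le_mul_of_nonneg_left ?_ hKb0
          rw [← Real.dist_eq]
          exact le_trans (dist_le_pi_dist y x' i) hdy
  calc |Ros k x y i - Ros k xt x' i|
      ≤ |∫ r in (0:ℝ)..(y i), (g₁ r - g₂ r)| + |∫ r in (x' i)..(y i), g₂ r| := by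
        rw [hdecomp]; exact abs_add_le _ _
    _ ≤ 2 * kmax * ε / klow ^ 2 + Kb * ρ' := add_le_add hbound1 hbound2

lemma marg_congr {κ κ' : (Fin d → ℝ) → (Fin d → ℝ) → ℝ}
    (hEq : ∀ x ∈ cube d, ∀ y ∈ cube d, κ x y = κ' x y)
    {x y : Fin d → ℝ} (hx : x ∈ cube d) (hy : y ∈ cube d) (i : ℕ) :
    marg κ i x y = marg κ' i x y :=
  setIntegral_congr_fun measurableSet_cube fun z hz =>
    hEq x hx _ (mix_mem_cube hy hz)

lemma condDensity_congr {κ κ' : (Fin d → ℝ) → (Fin d → ℝ) → ℝ}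
    (hEq : ∀ x ∈ cube d, ∀ y ∈ cube d, κ x y = κ' x y)
    {x y : Fin d → ℝ} (hx : x ∈ cube d) (hy : y ∈ cube d) (i : Fin d) :
    condDensity κ i x y = condDensity κ' i x y := by
  rw [condDensity, condDensity, marg_congr hEq hx hy, marg_congr hEq hx hy]

lemma Ros_congr {κ κ' : (Fin d → ℝ) → (Fin d → ℝ) → ℝ}
    (hEq : ∀ x ∈ cube d, ∀ y ∈ cube d, κ x y = κ' x y)
    {x y : Fin d → ℝ} (hx : x ∈ cube d) (hy : y ∈ cube d) (i : Fin d) :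
    Ros κ x y i = Ros κ' x y i := by
  rw [Ros, Ros, condCDF', condCDF']
  refine intervalIntegral.integral_congr fun r hr => ?_
  have hr1 : r ∈ Set.Icc (0:ℝ) 1 := Set.uIcc_subset_Icc ⟨le_refl 0, zero_le_one⟩ (hy i) hr
  exact condDensity_congr hEq hx (update_mem_cube hy hr1) i

end Lemma6Aux

set_option maxHeartbeats 4000000 in
/-- **Lemma 6 (image of a ball under the Rosenblatt transform).** Under (A1)-(A2) there are
`δ̄ ∈ (0, 1/2]` and a continuous strictly increasing `v` with `0 < v(δ) ≤ δ` and `v(δ) → 0`,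
independent of `(x̃, x')`, such that for all `δ ∈ (0, δ̄]` and `(x̃, x') ∈ X²` there is a closed
hypercube `W̄ ⊆ [0,1]^d` of side `2.5 K̄ δ` with `F_K(x, B_{v(δ)}(x')) ⊆ W̄` for every
`x ∈ B_{v(δ)}(x̃)`. -/

theorem ros_image_in_hypercube
    {d : ℕ} (hd : 0 < d)
    (κ : (Fin d → ℝ) → (Fin d → ℝ) → ℝ) (hκ : IsMarkovDensity κ)
    (hA1 : A1 κ) (Klow : ℝ) (hA2 : A2 κ Klow) :
    ∃ δbar : ℝ, δbar ∈ Set.Ioc (0:ℝ) (1/2) ∧ ∃ v : ℝ → ℝ,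
      ContinuousOn v (Set.Ioc 0 δbar) ∧ StrictMonoOn v (Set.Ioc 0 δbar) ∧
      (∀ δ ∈ Set.Ioc (0:ℝ) δbar, 0 < v δ ∧ v δ ≤ δ) ∧
      Tendsto v (nhdsWithin 0 (Set.Ioi 0)) (nhds 0) ∧
      ∀ δ ∈ Set.Ioc (0:ℝ) δbar, ∀ xt ∈ cube d, ∀ x' ∈ cube d,
        ∃ w : Fin d → ℝ,
          Set.Icc w (fun i => w i + 2.5 * Kbar κ * δ) ⊆ cube d ∧
          ∀ x ∈ ball' (v δ) xt, ∀ yy ∈ ball' (v δ) x',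
            Ros κ x yy ∈ Set.Icc w (fun i => w i + 2.5 * Kbar κ * δ) := by
  classical
  obtain ⟨hcont, hKlow, hge⟩ := hA2
  -- Tietze extension of the density to a globally continuous function
  have hZc : IsClosed ((cube d) ×ˢ (cube d) : Set ((Fin d → ℝ) × (Fin d → ℝ))) :=
    isClosed_cube.prod isClosed_cube
  obtain ⟨g, hg⟩ := ContinuousMap.exists_restrict_eq (Y := ℝ) hZc
    ⟨_, hcont.restrict⟩
  set k : (Fin d → ℝ) → (Fin d → ℝ) → ℝ := fun x y => g (x, y) with hkdef
  have hkc : Continuous fun p : (Fin d → ℝ) × (Fin d → ℝ) => k p.1 p.2 := g.continuous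
  have hkeq : ∀ x ∈ cube d, ∀ y ∈ cube d, κ x y = k x y := by
    intro x hx y hy
    have h1 := DFunLike.congr_fun hg (⟨(x, y), ⟨hx, hy⟩⟩ :
      ((cube d) ×ˢ (cube d) : Set ((Fin d → ℝ) × (Fin d → ℝ))))
    simpa [ContinuousMap.restrict] using h1.symm
  have hlb : ∀ x ∈ cube d, ∀ y ∈ cube d, Klow ≤ k x y := fun x hx y hy =>
    (hkeq x hx y hy) ▸ hge x hx y hy
  obtain ⟨C, hC⟩ := (isCompact_cube.prod isCompact_cube).exists_bound_of_continuousOn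
    hkc.continuousOn
  set kmax : ℝ := max C Klow with hkmax
  have hub : ∀ x ∈ cube d, ∀ y ∈ cube d, k x y ≤ kmax := fun x hx y hy =>
    le_trans (le_trans (le_abs_self _) (hC (x, y) ⟨hx, hy⟩)) (le_max_left _ _)
  have hkm : (0:ℝ) < kmax := lt_of_lt_of_le hKlow (le_max_right _ _)
  -- Kbar facts
  set Kb : ℝ := Kbar κ with hKbdef
  set S0 : Set ℝ := {r | ∃ (i : Fin d) (x y : Fin d → ℝ),
    x ∈ cube d ∧ y ∈ cube d ∧ condDensity κ i x y = r} with hS0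
  have hbdd : BddAbove S0 := by
    refine ⟨kmax / Klow, fun r hr => ?_⟩
    obtain ⟨i, x, y, hx, hy, hrr⟩ := hr
    rw [← hrr, condDensity_congr hkeq hx hy]
    exact (condDensity_bounds k hkc hKlow hlb hub hx hy i).2
  have hKb_ub : ∀ (i : Fin d) (x y : Fin d → ℝ), x ∈ cube d → y ∈ cube d →
      condDensity k i x y ≤ Kb := by
    intro i x y hx hy
    rw [← condDensity_congr hkeq hx hy]
    exact le_csSup hbdd ⟨i, x, y, hx, hy, rfl⟩
  have hKb_pos : (0:ℝ) < Kb := by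
    set i₀ : Fin d := ⟨0, hd⟩
    have hmem : condDensity κ i₀ (fun _ => 0) (fun _ => 0) ∈ S0 :=
      ⟨i₀, _, _, zero_mem_cube, zero_mem_cube, rfl⟩
    refine lt_of_lt_of_le (div_pos hKlow hkm) (le_trans ?_ (le_csSup hbdd hmem))
    rw [condDensity_congr hkeq zero_mem_cube zero_mem_cube]
    exact (condDensity_bounds k hkc hKlow hlb hub zero_mem_cube zero_mem_cube i₀).1
  -- uniform continuity of k on the compact product
  have hUC : ∀ ε > 0, ∃ ρ > 0, ∀ p ∈ (cube d) ×ˢ (cube d), ∀ q ∈ (cube d) ×ˢ (cube d),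
      dist p q ≤ ρ → |k p.1 p.2 - k q.1 q.2| ≤ ε := by
    intro ε hε
    have huc := (isCompact_cube.prod isCompact_cube).uniformContinuousOn_of_continuous
      (hkc.continuousOn (s := (cube d) ×ˢ (cube d)))
    rw [Metric.uniformContinuousOn_iff] at huc
    obtain ⟨ρ, hρ, H⟩ := huc ε hε
    refine ⟨ρ / 2, by linarith, fun p hp q hq hpq => ?_⟩
    have := H p hp q hq (lt_of_le_of_lt hpq (by linarith))
    rw [Real.dist_eq] at this
    exact this.le
  -- the modulus machinery
  set γ : ℝ := Klow ^ 2 * Kb / (8 * kmax) with hγdef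
  have hγ : 0 < γ := by positivity
  set S : ℝ → Set ℝ := fun t => {r : ℝ | r ∈ Set.Ioc (0:ℝ) (1/2) ∧
    ∀ p ∈ (cube d) ×ˢ (cube d), ∀ q ∈ (cube d) ×ˢ (cube d),
      dist p q ≤ r → |k p.1 p.2 - k q.1 q.2| ≤ γ * t} with hSdef
  have hSne : ∀ t : ℝ, 0 < t → (S t).Nonempty := by
    intro t ht
    obtain ⟨ρ, hρ, H⟩ := hUC (γ * t) (by positivity)
    refine ⟨min ρ (1/2), ⟨lt_min hρ (by norm_num), min_le_right _ _⟩,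
      fun p hp q hq hpq => H p hp q hq (le_trans hpq (min_le_left _ _))⟩
  have hSsub : ∀ t, S t ⊆ Set.Ioc (0:ℝ) (1/2) := fun t r hr => hr.1
  have hSbdd : ∀ t, BddAbove (S t) := fun t =>
    ⟨1/2, fun r hr => (hSsub t hr).2⟩
  have hsSup_nonneg : ∀ t, 0 ≤ sSup (S t) := by
    intro t
    rcases Set.eq_empty_or_nonempty (S t) with h | h
    · rw [h, Real.sSup_empty]
    · obtain ⟨r, hr⟩ := h
      exact le_trans (hSsub t hr).1.le (le_csSup (hSbdd t) hr)
  have hsSup_le : ∀ t, sSup (S t) ≤ 1/2 := by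
    intro t
    rcases Set.eq_empty_or_nonempty (S t) with h | h
    · rw [h, Real.sSup_empty]; norm_num
    · exact csSup_le h fun r hr => (hSsub t hr).2
  set η : ℝ → ℝ := fun t => sSup (S t) / 2 with hηdef
  have hηmono : Monotone η := by
    intro t t' htt'
    rcases Set.eq_empty_or_nonempty (S t) with h | h
    · simp only [hηdef, h, Real.sSup_empty]
      have := hsSup_nonneg t'
      linarith
    · have hsub : S t ⊆ S t' := by
        intro r hr
        refine ⟨hr.1, fun p hp q hq hpq => le_trans (hr.2 p hp q hq hpq) ?_⟩
        nlinarith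
      have := csSup_le_csSup (hSbdd t') h hsub
      simp only [hηdef]
      linarith
  have hηmem : ∀ t : ℝ, 0 < t → η t ∈ S t := by
    intro t ht
    obtain ⟨r₀, hr₀⟩ := hSne t ht
    have hpos : 0 < sSup (S t) := lt_of_lt_of_le (hSsub t hr₀).1 (le_csSup (hSbdd t) hr₀)
    have hlt : η t < sSup (S t) := by
      rw [hηdef]; linarith
    obtain ⟨r, hrS, hrgt⟩ := exists_lt_of_lt_csSup ⟨r₀, hr₀⟩ hlt
    refine ⟨⟨by rw [hηdef]; linarith, le_trans hrgt.le (hSsub t hrS).2⟩,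
      fun p hp q hq hpq => (hrS.2 p hp q hq (le_trans hpq hrgt.le))⟩
  have hη0 : ∀ t, 0 ≤ η t := fun t => by
    rw [hηdef]; have := hsSup_nonneg t; linarith
  have hη14 : ∀ t, η t ≤ 1/4 := fun t => by
    rw [hηdef]; have := hsSup_le t; linarith
  -- the function v
  set v : ℝ → ℝ := fun δ => ∫ t in (0:ℝ)..δ, η t with hvdef
  have hηint : ∀ a b : ℝ, IntervalIntegrable η volume a b := fun a b =>
    (hηmono.monotoneOn _).intervalIntegrable
  have hvcont : Continuous v := intervalIntegral.continuous_primitive hηint 0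
  have hvmono : ∀ a b : ℝ, 0 < a → a < b → v a < v b := by
    intro a b ha hab
    have hsplit : v b - v a = ∫ t in a..b, η t := by
      rw [hvdef]
      simp only
      rw [← intervalIntegral.integral_add_adjacent_intervals (hηint 0 a) (hηint a b)]
      ring
    have hconst : η a * (b - a) ≤ ∫ t in a..b, η t := by
      have := intervalIntegral.integral_mono_on hab.le
        (intervalIntegrable_const (c := η a)) (hηint a b)
        (fun u hu => hηmono hu.1)
      rw [intervalIntegral.integral_const] at this
      calc η a * (b - a) = (b - a) • η a := by rw [smul_eq_mul]; ring
        _ ≤ _ := this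
    have hηa : 0 < η a := (hηmem a ha).1.1
    nlinarith
  have hv_le : ∀ δ : ℝ, 0 < δ → v δ ≤ δ / 4 := by
    intro δ hδ
    have := intervalIntegral.integral_mono_on hδ.le (hηint 0 δ)
      (intervalIntegrable_const (c := (1/4:ℝ))) (fun u _ => hη14 u)
    rw [intervalIntegral.integral_const] at this
    calc v δ ≤ (δ - 0) • (1/4:ℝ) := this
      _ = δ / 4 := by rw [smul_eq_mul]; ring
  have hv_pos : ∀ δ : ℝ, 0 < δ → 0 < v δ := by
    intro δ hδ
    have h2 : 0 < δ / 2 := by linarith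
    calc (0:ℝ) < v (δ/2) + (v δ - v (δ/2)) := by
          have := hvmono (δ/2) δ h2 (by linarith)
          have hv2 : 0 ≤ v (δ/2) := by
            refine intervalIntegral.integral_nonneg h2.le fun u hu => hη0 u
          linarith
      _ = v δ := by ring
  have hv_le_η : ∀ δ : ℝ, 0 < δ → δ ≤ 1 → v δ ≤ η δ := by
    intro δ hδ hδ1
    have := intervalIntegral.integral_mono_on hδ.le (hηint 0 δ)
      (intervalIntegrable_const (c := η δ)) (fun u hu => hηmono hu.2)
    rw [intervalIntegral.integral_const] at this
    calc v δ ≤ (δ - 0) • η δ := this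
      _ = δ * η δ := by rw [smul_eq_mul]; ring
      _ ≤ 1 * η δ := mul_le_mul_of_nonneg_right hδ1 (hη0 δ)
      _ = η δ := one_mul _
  -- δbar
  set δbar : ℝ := min (1/2 : ℝ) (1 / (5 * Kb)) with hδbardef
  have hδbar_pos : 0 < δbar := lt_min (by norm_num) (by positivity)
  have hδbar_half : δbar ≤ 1/2 := min_le_left _ _
  refine ⟨δbar, ⟨hδbar_pos, hδbar_half⟩, v, hvcont.continuousOn, ?_, ?_, ?_, ?_⟩
  · -- strict mono
    intro a ha b hb hab
    exact hvmono a b ha.1 hab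
  · -- positivity and v ≤ δ
    intro δ hδ
    exact ⟨hv_pos δ hδ.1, le_trans (hv_le δ hδ.1) (by linarith [hδ.1])⟩
  · -- tendsto
    have h1 : Tendsto (fun δ : ℝ => δ / 4) (nhdsWithin 0 (Set.Ioi 0)) (nhds 0) := by
      have : Tendsto (fun δ : ℝ => δ / 4) (nhds 0) (nhds 0) := by
        have := (continuous_id.div_const (4:ℝ)).tendsto (0:ℝ)
        simpa using this
      exact this.mono_left nhdsWithin_le_nhds
    refine tendsto_of_tendsto_of_tendsto_of_le_of_le' tendsto_const_nhds h1 ?_ ?_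
    · filter_upwards [self_mem_nhdsWithin] with δ hδ
      exact (hv_pos δ hδ).le
    · filter_upwards [self_mem_nhdsWithin] with δ hδ
      exact hv_le δ hδ
  · -- main estimate
    intro δ hδ xt hxt x' hx'
    have hδ0 : 0 < δ := hδ.1
    have hδb : δ ≤ δbar := hδ.2
    have hδ1 : δ ≤ 1 := le_trans hδb (by linarith)
    have hKbδ : Kb * δ ≤ 1 / 5 := by
      have h5 : δ ≤ 1 / (5 * Kb) := le_trans hδb (min_le_right _ _)
      rw [le_div_iff₀ (by positivity)] at h5
      nlinarith
    have hs_le : 2.5 * Kb * δ ≤ 1/2 := by nlinarith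
    have hs_pos : 0 < 2.5 * Kb * δ := by positivity
    set c : Fin d → ℝ := Ros κ xt x' with hcdef
    have hc01 : ∀ i : Fin d, 0 ≤ c i ∧ c i ≤ 1 := by
      intro i
      rw [hcdef]
      rw [Ros_congr hkeq hxt hx' i]
      exact ⟨Ros_nonneg k hkc hKlow hlb hub hxt hx' i,
        Ros_le_one k hkc hKlow hlb hub hUC hxt hx' i⟩
    set w : Fin d → ℝ := fun i =>
      max 0 (min (c i - 5/4 * Kb * δ) (1 - 2.5 * Kb * δ)) with hwdef
    refine ⟨w, ?_, ?_⟩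
    · -- box inside cube
      intro p hp
      rw [Set.mem_Icc] at hp
      intro i
      have h1 : w i ≤ p i := hp.1 i
      have h2 : p i ≤ w i + 2.5 * Kbar κ * δ := hp.2 i
      have hw0 : 0 ≤ w i := le_max_left _ _
      have hwB : w i ≤ 1 - 2.5 * Kb * δ := by
        rw [hwdef]
        refine max_le ?_ (min_le_right _ _)
        linarith
      exact ⟨le_trans hw0 h1, by linarith⟩
    · -- image contained
      intro x hx yy hyy
      obtain ⟨hxc, hxd⟩ := hx
      obtain ⟨hyc, hyd⟩ := hyy
      have hdx : dist x xt ≤ v δ := by rwa [dist_eq_norm]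
      have hdy : dist yy x' ≤ v δ := by rwa [dist_eq_norm]
      have hηδ := hηmem δ hδ0
      have hvη : v δ ≤ η δ := hv_le_η δ hδ0 hδ1
      have hosc : ∀ i : Fin d, |Ros κ x yy i - c i| ≤ 5/4 * Kb * δ := by
        intro i
        rw [hcdef, Ros_congr hkeq hxc hyc i, Ros_congr hkeq hxt hx' i]
        have hestimate := Ros_osc k hkc hKlow hlb hub hUC hηδ.2 hKb_ub hKb_pos.le
          hxc hxt hyc hx' hdx hdy hvη i
        refine le_trans hestimate ?_
        have harith : 2 * kmax * (γ * δ) / Klow ^ 2 = Kb * δ / 4 := by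
          rw [hγdef]
          field_simp
          ring
        rw [harith]
        have hvδ : v δ ≤ δ := le_trans (hv_le δ hδ0) (by linarith)
        nlinarith [mul_le_mul_of_nonneg_left hvδ hKb_pos.le]
      have hR01 : ∀ i : Fin d, 0 ≤ Ros κ x yy i ∧ Ros κ x yy i ≤ 1 := by
        intro i
        rw [Ros_congr hkeq hxc hyc i]
        exact ⟨Ros_nonneg k hkc hKlow hlb hub hxc hyc i,
          Ros_le_one k hkc hKlow hlb hub hUC hxc hyc i⟩
      rw [Set.mem_Icc]
      constructor <;> intro i
      · -- w i ≤ Ros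
        have := hosc i
        have h1 := (hR01 i).1
        rw [abs_le] at this
        refine max_le h1 (le_trans (min_le_left _ _) ?_)
        linarith [this.2]
      · -- Ros ≤ w i + s
        have := hosc i
        have h2 := (hR01 i).2
        rw [abs_le] at this
        have hwge : min (c i - 5/4 * Kb * δ) (1 - 2.5 * Kb * δ) ≤ w i := le_max_right _ _
        rcases le_total (c i - 5/4 * Kb * δ) (1 - 2.5 * Kb * δ) with hmin | hmin
        · rw [min_eq_left hmin] at hwge
          linarith [this.1]
        · rw [min_eq_right hmin] at hwge
          linarith
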